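/- Let A, B be tropical matrices of compatible sizes. Then the tropical rank of the product satisfies tr-rk(A⊙B) ≤ min(tr-rk(A), tr-rk(B)). -/

import Mathlib

/-- The max-plus (tropical) semiring `T = ℝ ∪ {-∞}`. -/
abbrev T : Type := WithBot ℝ

/-- Tropical matrix product. -/
noncomputable def tmul {n m k : ℕ} (A : Fin n → Fin m → T) (B : Fin m → Fin k → T) :
    Fin n → Fin k → T :=
  fun i j => Finset.univ.sup fun l => A i l + B l j

/-- Tropical matrix-vector product. -/
noncomputable def tmulVec {n m : ℕ} (A : Fin n → Fin m → T) (u : Fin m → T) : Fin n → T :=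
  fun i => Finset.univ.sup fun j => A i j + u j

/-- Tropical identity matrix. -/
noncomputable def tId (n : ℕ) : Fin n → Fin n → T :=
  fun i j => if i = j then (0 : T) else ⊥

/-- Tropical matrix powers. -/
noncomputable def tpow {n : ℕ} (A : Fin n → Fin n → T) : ℕ → (Fin n → Fin n → T)
  | 0 => tId n
  | (m + 1) => tmul (tpow A m) A

/-- Tropical product of a list of matrices (empty product = identity). -/
noncomputable def tProd {n : ℕ} : List (Fin n → Fin n → T) → (Fin n → Fin n → T)
  | [] => tId n
  | (M :: L) => tmul M (tProd L)

/-- Weight of a permutation. -/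
noncomputable def wt {n : ℕ} (A : Fin n → Fin n → T) (σ : Equiv.Perm (Fin n)) : T :=
  ∑ i, A i (σ i)

/-- Tropical permanent. -/
noncomputable def per {n : ℕ} (A : Fin n → Fin n → T) : T :=
  Finset.univ.sup fun σ : Equiv.Perm (Fin n) => wt A σ

/-- Tropical non-singularity: finite permanent attained by a unique permutation. -/
def NonSingular {n : ℕ} (A : Fin n → Fin n → T) : Prop :=
  per A ≠ ⊥ ∧ ∃! σ : Equiv.Perm (Fin n), wt A σ = per A

/-- Weight of the circuit `c 0 → c 1 → ⋯ → c ℓ → c 0` (length `ℓ+1`). -/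
noncomputable def cwt {n ℓ : ℕ} (A : Fin n → Fin n → T) (c : Fin (ℓ + 1) → Fin n) : T :=
  ∑ k : Fin (ℓ + 1), A (c k) (c (k + 1))

/-- `ρ(A) = r`: some circuit has mean weight `r`, and every circuit has mean weight `≤ r`. -/
def RhoEq {n : ℕ} (A : Fin n → Fin n → T) (r : ℝ) : Prop :=
  (∃ ℓ, ∃ c : Fin (ℓ + 1) → Fin n, cwt A c = ((((ℓ : ℝ) + 1) * r : ℝ) : T)) ∧
  ∀ ℓ, ∀ c : Fin (ℓ + 1) → Fin n, cwt A c ≤ ((((ℓ : ℝ) + 1) * r : ℝ) : T)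

/-- `(i,j)` is an arc of the critical graph (lies on a circuit of mean weight `r = ρ(A)`). -/
def CritArc {n : ℕ} (A : Fin n → Fin n → T) (r : ℝ) (i j : Fin n) : Prop :=
  ∃ ℓ, ∃ c : Fin (ℓ + 1) → Fin n, cwt A c = ((((ℓ : ℝ) + 1) * r : ℝ) : T) ∧
    ∃ k : Fin (ℓ + 1), c k = i ∧ c (k + 1) = j

/-- `i` is a node of the critical graph. -/
def CritNode {n : ℕ} (A : Fin n → Fin n → T) (r : ℝ) (i : Fin n) : Prop :=
  ∃ ℓ, ∃ c : Fin (ℓ + 1) → Fin n, cwt A c = ((((ℓ : ℝ) + 1) * r : ℝ) : T) ∧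
    ∃ k : Fin (ℓ + 1), c k = i

/-- Reachability in the critical graph. -/
def CritReach {n : ℕ} (A : Fin n → Fin n → T) (r : ℝ) : Fin n → Fin n → Prop :=
  Relation.ReflTransGen (fun i j => CritArc A r i j)

/-- Same strongly connected component of the critical graph. -/
def SameScc {n : ℕ} (A : Fin n → Fin n → T) (r : ℝ) (i j : Fin n) : Prop :=
  CritReach A r i j ∧ CritReach A r j i

/-- `R` is a set of representatives, one per scc of the critical graph. -/
def SccReps {n : ℕ} (A : Fin n → Fin n → T) (r : ℝ) (R : Finset (Fin n)) : Prop :=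
  (∀ i ∈ R, CritNode A r i) ∧
  (∀ i ∈ R, ∀ j ∈ R, i ≠ j → ¬ SameScc A r i j) ∧
  (∀ j, CritNode A r j → ∃ i ∈ R, SameScc A r i j)

/-- Cyclicity of the scc of the critical graph containing `i`:
the gcd (greatest common divisor) of the lengths of the critical circuits through `i`. -/
noncomputable def cycAt {n : ℕ} (A : Fin n → Fin n → T) (r : ℝ) (i : Fin n) : ℕ :=
  sSup {d : ℕ | ∀ ℓ : ℕ,
    (∃ c : Fin (ℓ + 1) → Fin n, cwt A c = ((((ℓ : ℝ) + 1) * r : ℝ) : T) ∧ c 0 = i) →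
    d ∣ (ℓ + 1)}

/-- `A` has an `r × r` tropically non-singular submatrix. -/
def HasNSsub {n m : ℕ} (A : Fin n → Fin m → T) (r : ℕ) : Prop :=
  ∃ f : Fin r → Fin n, ∃ g : Fin r → Fin m,
    Function.Injective f ∧ Function.Injective g ∧
    NonSingular (fun i j => A (f i) (g j))

/-- Tropical rank: maximal size of a tropically non-singular square submatrix. -/
noncomputable def trrk {n m : ℕ} (A : Fin n → Fin m → T) : ℕ :=
  sSup {r : ℕ | HasNSsub A r}

/-- Tropical convex hull (span) of a finite family of vectors of `T^n`. -/
def tSpan {n m : ℕ} (v : Fin m → (Fin n → T)) : Set (Fin n → T) :=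
  { w | ∃ α : Fin m → T, w = fun i => Finset.univ.sup fun j => α j + v j i }

/-- Weak dimension of a tropically convex set: minimal size of a generating family. -/
noncomputable def weakDim {n : ℕ} (X : Set (Fin n → T)) : ℕ :=
  sInf {k : ℕ | ∃ v : Fin k → (Fin n → T), tSpan v = X}

/-- Column rank: weak dimension of the tropical convex hull of the columns. -/
noncomputable def colrk {n m : ℕ} (A : Fin n → Fin m → T) : ℕ :=
  weakDim (tSpan fun j => fun i => A i j)

/-- Row rank: weak dimension of the tropical convex hull of the rows. -/
noncomputable def rowrk {n m : ℕ} (A : Fin n → Fin m → T) : ℕ :=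
  weakDim (tSpan fun i => fun j => A i j)

/-- The tropical rank of a product is at most the minimum of the
tropical ranks of the factors. -/
private lemma Tsum_ne_bot {ι : Type*} [DecidableEq ι] (s : Finset ι) (f : ι → T) (h : ∀ i ∈ s, f i ≠ ⊥) :
    ∑ i ∈ s, f i ≠ ⊥ := by
  induction s using Finset.induction_on with
  | empty => simp
  | insert _ _ hx ih =>
      rw [Finset.sum_insert hx, Ne, WithBot.add_eq_bot]
      push_neg
      exact ⟨h _ (Finset.mem_insert_self _ _),
        ih fun i hi => h i (Finset.mem_insert_of_mem hi)⟩

private lemma Tterm_ne_bot {ι : Type*} [DecidableEq ι] {s : Finset ι} {f : ι → T}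
    (h : ∑ i ∈ s, f i ≠ ⊥) {i : ι} (hi : i ∈ s) : f i ≠ ⊥ := by
  intro hfi
  apply h
  rw [← Finset.add_sum_erase s f hi, hfi, WithBot.bot_add]

private lemma key_lemma {r : ℕ} (C M : Fin r → Fin r → T) (σs : Equiv.Perm (Fin r)) (s : T)
    (hs : s ≠ ⊥) (hCbot : per C ≠ ⊥)
    (huniq : ∀ ρ : Equiv.Perm (Fin r), wt C ρ = per C → ρ = σs)
    (hmax : wt C σs = per C)
    (hle : ∀ τ : Equiv.Perm (Fin r), wt M τ + s ≤ wt C (τ.trans σs))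
    (heq : wt M (Equiv.refl _) + s = wt C σs) :
    NonSingular M ∧ ∀ τ : Equiv.Perm (Fin r), wt M τ = per M → τ = Equiv.refl _ := by
  have hMrefl_ne : wt M (Equiv.refl _) ≠ ⊥ := by
    intro h0
    apply hCbot
    rw [← hmax, ← heq, h0, WithBot.bot_add]
  have hwle : ∀ τ : Equiv.Perm (Fin r), wt M τ ≤ wt M (Equiv.refl _) := by
    intro τ
    have h1 : wt M τ + s ≤ wt M (Equiv.refl _) + s := by
      calc wt M τ + s ≤ wt C (τ.trans σs) := hle τ
        _ ≤ per C := Finset.le_sup (Finset.mem_univ _)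
        _ = wt M (Equiv.refl _) + s := by rw [← hmax, heq]
    exact (WithBot.add_le_add_iff_right hs).mp h1
  have hper : per M = wt M (Equiv.refl _) :=
    le_antisymm (Finset.sup_le fun τ _ => hwle τ) (Finset.le_sup (Finset.mem_univ _))
  have huniqM : ∀ τ : Equiv.Perm (Fin r), wt M τ = per M → τ = Equiv.refl _ := by
    intro τ hτ
    have h1 : wt C (τ.trans σs) = per C := by
      refine le_antisymm (Finset.le_sup (Finset.mem_univ _)) ?_
      calc per C = wt M (Equiv.refl _) + s := by rw [← hmax, heq]
        _ = wt M τ + s := by rw [← hper, hτ]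
        _ ≤ wt C (τ.trans σs) := hle τ
    have h2 := huniq _ h1
    refine Equiv.ext fun x => σs.injective ?_
    have h3 : (τ.trans σs) x = σs x := by rw [h2]
    simpa [Equiv.trans_apply] using h3
  refine ⟨⟨by rw [hper]; exact hMrefl_ne, Equiv.refl _, hper.symm,
    fun τ hτ => huniqM τ hτ⟩, huniqM⟩

private lemma hasNS_factors {n m k r : ℕ} (A : Fin n → Fin m → T) (B : Fin m → Fin k → T)
    (h : HasNSsub (tmul A B) r) : HasNSsub A r ∧ HasNSsub B r := by
  obtain ⟨f, g, hf, hg, hns⟩ := h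
  set C : Fin r → Fin r → T := fun i j => tmul A B (f i) (g j) with hCdef
  obtain ⟨hCbot, σs, hmax, huq⟩ := hns
  have huniq : ∀ ρ : Equiv.Perm (Fin r), wt C ρ = per C → ρ = σs := huq
  -- each diagonal entry is finite
  have hdiag : ∀ i, C i (σs i) ≠ ⊥ := by
    intro i
    have hne : wt C σs ≠ ⊥ := by rw [hmax]; exact hCbot
    have hne' : ∑ i, C i (σs i) ≠ ⊥ := hne
    exact Tterm_ne_bot hne' (Finset.mem_univ i)
  -- choose index attaining the sup on the diagonal
  have hchoice : ∀ i : Fin r, ∃ l : Fin m, C i (σs i) = A (f i) l + B l (g (σs i)) := by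
    intro i
    have hCeq : C i (σs i) =
        Finset.univ.sup (fun l => A (f i) l + B l (g (σs i))) := rfl
    rcases (Finset.univ : Finset (Fin m)).eq_empty_or_nonempty with he | hne
    · exfalso
      apply hdiag i
      rw [hCeq, he, Finset.sup_empty]
    · obtain ⟨l, _, hl⟩ := Finset.exists_mem_eq_sup Finset.univ hne
        (fun l => A (f i) l + B l (g (σs i)))
      exact ⟨l, by rw [hCeq, hl]⟩
  choose ℓ hℓ using hchoice
  have hAB_ne : ∀ i, A (f i) (ℓ i) ≠ ⊥ ∧ B (ℓ i) (g (σs i)) ≠ ⊥ := by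
    intro i
    have h1 := hdiag i
    rw [hℓ i, Ne, WithBot.add_eq_bot] at h1
    push_neg at h1
    exact h1
  -- termwise bound
  have hterm : ∀ (i : Fin r) (j : Fin r) (l : Fin m),
      A (f i) l + B l (g j) ≤ C i j := by
    intro i j l
    exact Finset.le_sup (f := fun l => A (f i) l + B l (g j)) (Finset.mem_univ l)
  --------------------------------
  -- Factor A
  --------------------------------
  set M : Fin r → Fin r → T := fun i j => A (f i) (ℓ j) with hMdef
  set s : T := ∑ j, B (ℓ j) (g (σs j)) with hsdef
  have hs : s ≠ ⊥ := Tsum_ne_bot _ _ fun j _ => (hAB_ne j).2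
  have hleA : ∀ τ : Equiv.Perm (Fin r), wt M τ + s ≤ wt C (τ.trans σs) := by
    intro τ
    have hrw : wt M τ + s =
        ∑ i, (A (f i) (ℓ (τ i)) + B (ℓ (τ i)) (g (σs (τ i)))) := by
      have h2 : s = ∑ i, B (ℓ (τ i)) (g (σs (τ i))) :=
        (Equiv.sum_comp τ (fun j => B (ℓ j) (g (σs j)))).symm
      show (∑ i, M i (τ i)) + s = _
      rw [h2, ← Finset.sum_add_distrib]
    rw [hrw]
    show _ ≤ ∑ i, C i ((τ.trans σs) i)
    exact Finset.sum_le_sum fun i _ => hterm i (σs (τ i)) (ℓ (τ i))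
  have heqA : wt M (Equiv.refl _) + s = wt C σs := by
    have hrw : wt M (Equiv.refl _) + s =
        ∑ i, (A (f i) (ℓ i) + B (ℓ i) (g (σs i))) := by
      show (∑ i, M i i) + s = _
      rw [hsdef, ← Finset.sum_add_distrib]
    rw [hrw]
    show _ = ∑ i, C i (σs i)
    exact Finset.sum_congr rfl fun i _ => (hℓ i).symm
  obtain ⟨hNSM, huniqM⟩ := key_lemma C M σs s hs hCbot huniq hmax hleA heqA
  have hperM : wt M (Equiv.refl _) = per M := by
    obtain ⟨σ₀, h₀, _⟩ := hNSM.2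
    rwa [huniqM σ₀ h₀] at h₀
  -- injectivity of ℓ
  have hinj : Function.Injective ℓ := by
    intro i j hij
    by_contra hne
    have hcomp : ∀ t, ℓ (Equiv.swap i j t) = ℓ t := by
      intro t
      rcases eq_or_ne t i with rfl | hti
      · rw [Equiv.swap_apply_left]; exact hij.symm
      rcases eq_or_ne t j with rfl | htj
      · rw [Equiv.swap_apply_right]; exact hij
      · rw [Equiv.swap_apply_of_ne_of_ne hti htj]
    have hwt : wt M (Equiv.swap i j) = wt M (Equiv.refl _) := by
      show (∑ t, M t (Equiv.swap i j t)) = ∑ t, M t t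
      refine Finset.sum_congr rfl fun t _ => ?_
      show A (f t) (ℓ (Equiv.swap i j t)) = A (f t) (ℓ t)
      rw [hcomp t]
    have hsw := huniqM (Equiv.swap i j) (by rw [hwt, hperM])
    have : Equiv.swap i j i = Equiv.refl (Fin r) i := by rw [hsw]
    rw [Equiv.swap_apply_left] at this
    exact hne this.symm
  have hA : HasNSsub A r := ⟨f, ℓ, hf, hinj, hNSM⟩
  --------------------------------
  -- Factor B
  --------------------------------
  set M' : Fin r → Fin r → T := fun i j => B (ℓ i) (g (σs j)) with hM'def
  set s' : T := ∑ i, A (f i) (ℓ i) with hs'def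
  have hs' : s' ≠ ⊥ := Tsum_ne_bot _ _ fun j _ => (hAB_ne j).1
  have hleB : ∀ τ : Equiv.Perm (Fin r), wt M' τ + s' ≤ wt C (τ.trans σs) := by
    intro τ
    have hrw : wt M' τ + s' =
        ∑ i, (A (f i) (ℓ i) + B (ℓ i) (g (σs (τ i)))) := by
      show (∑ i, M' i (τ i)) + s' = _
      rw [hs'def, ← Finset.sum_add_distrib]
      exact Finset.sum_congr rfl fun i _ => add_comm _ _
    rw [hrw]
    show _ ≤ ∑ i, C i ((τ.trans σs) i)
    exact Finset.sum_le_sum fun i _ => hterm i (σs (τ i)) (ℓ i)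
  have heqB : wt M' (Equiv.refl _) + s' = wt C σs := by
    have hrw : wt M' (Equiv.refl _) + s' =
        ∑ i, (A (f i) (ℓ i) + B (ℓ i) (g (σs i))) := by
      show (∑ i, M' i i) + s' = _
      rw [hs'def, ← Finset.sum_add_distrib]
      exact Finset.sum_congr rfl fun i _ => add_comm _ _
    rw [hrw]
    show _ = ∑ i, C i (σs i)
    exact Finset.sum_congr rfl fun i _ => (hℓ i).symm
  obtain ⟨hNSM', _⟩ := key_lemma C M' σs s' hs' hCbot huniq hmax hleB heqB
  have hB : HasNSsub B r :=
    ⟨ℓ, fun j => g (σs j), hinj, hg.comp σs.injective, hNSM'⟩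
  exact ⟨hA, hB⟩

private lemma bdd_hasNS {n m : ℕ} (A : Fin n → Fin m → T) :
    BddAbove {r | HasNSsub A r} := by
  refine ⟨n, fun r hr => ?_⟩
  obtain ⟨f, _, hf, _, _⟩ := hr
  simpa using Fintype.card_le_of_injective f hf

/-- The tropical rank of a product is at most the minimum of the
tropical ranks of the factors. -/
theorem stmt11 {n m k : ℕ} (A : Fin n → Fin m → T) (B : Fin m → Fin k → T) :
    trrk (tmul A B) ≤ min (trrk A) (trrk B) := by
  refine le_min ?_ ?_
  · refine csSup_le' fun r hr => ?_
    exact le_csSup (bdd_hasNS A) (hasNS_factors A B hr).1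
  · refine csSup_le' fun r hr => ?_
    exact le_csSup (bdd_hasNS B) (hasNS_factors A B hr).2
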